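/- Let n≥2 be an integer and g a nonnegative integer with gcd(n,g)=1. Set M = g(k)(H_{k,n} − H_{k,0}) and N = H_{k,1} − H_{k,n+1}, and assume H_{k,1} ≠ 0 and M ≠ 0. Then det C_{n,g}(H) = det(Q_g) · [ H_{k,1}·N^{n−1} + H_{k,1}·M^{n−2} · Σ_{i=1}^{n−1} ( −H_{k,2}H_{k,i+1}/H_{k,1} + H_{k,i+2} ) · (N/M)^{i−1} ]. -/

import Mathlib

/-- The `g`-circulant matrix of size `n` with first row `(a 0, a 1, …, a (n-1))`:
its `(i,j)` entry (0-indexed) equals `a ((j - i*g) mod n)`. -/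
def gCirc {α : Type*} (n g : ℕ) (a : ℕ → α) : Matrix (Fin n) (Fin n) α :=
  Matrix.of fun i j => a ((j.val + (n - (i.val * g) % n)) % n)

/-- `Q_g`: the `g`-circulant matrix with first row `(1,0,…,0)`. -/
def Qg (n g : ℕ) : Matrix (Fin n) (Fin n) ℝ :=
  gCirc n g (fun m => if m = 0 then (1 : ℝ) else 0)

lemma gCirc_factor (n r : ℕ) (hn : 0 < n) (a : ℕ → ℝ) :
    gCirc n r a = Qg n r * gCirc n 1 a := by
  ext i j
  rw [Matrix.mul_apply]
  have ht : (i.val * r) % n < n := Nat.mod_lt _ hn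
  rw [Finset.sum_eq_single (⟨(i.val * r) % n, ht⟩ : Fin n)]
  · simp only [Qg, gCirc, Matrix.of_apply]
    have h1 : (((⟨(i.val * r) % n, ht⟩ : Fin n) : ℕ) + (n - (i.val * r) % n)) % n = 0 := by
      have h : ((⟨(i.val * r) % n, ht⟩ : Fin n) : ℕ) + (n - (i.val * r) % n) = n := by
        simp only [Fin.val_mk]; omega
      rw [h, Nat.mod_self]
    rw [h1]
    simp only [Fin.val_mk, Nat.mul_one]
    rw [Nat.mod_eq_of_lt ht, if_pos trivial, one_mul]
  · intro l _ hl
    simp only [Qg, gCirc, Matrix.of_apply]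
    have hcond : ¬ ((l : ℕ) + (n - (i.val * r) % n)) % n = 0 := by
      intro h0
      have hlv : (l : ℕ) ≠ (i.val * r) % n := fun h => hl (Fin.ext h)
      rcases Nat.lt_or_ge ((l : ℕ) + (n - (i.val * r) % n)) n with hc | hc
      · rw [Nat.mod_eq_of_lt hc] at h0
        omega
      · rw [Nat.mod_eq_sub_mod hc] at h0
        have hlt : (l : ℕ) + (n - (i.val * r) % n) - n < n := by
          have := l.isLt; omega
        rw [Nat.mod_eq_of_lt hlt] at h0
        have := l.isLt; omega
    rw [if_neg hcond, zero_mul]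
  · intro h
    exact absurd (Finset.mem_univ _) h

def Tm (n : ℕ) (fk gk : ℝ) : Matrix (Fin n) (Fin n) ℝ :=
  Matrix.of fun i j =>
    if i = j then 1
    else if i.val + 1 = j.val ∧ 2 ≤ j.val then -fk
    else if i.val + 2 = j.val then -gk
    else 0

lemma detTm (n : ℕ) (fk gk : ℝ) : (Tm n fk gk).det = 1 := by
  have hut : (Tm n fk gk).BlockTriangular id := by
    intro i j hij
    have hij' : j.val < i.val := hij
    simp only [Tm, Matrix.of_apply]
    rw [if_neg (by intro h; rw [h] at hij'; omega), if_neg (by omega), if_neg (by omega)]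
  rw [Matrix.det_of_upperTriangular hut]
  apply Finset.prod_eq_one
  intro i _
  simp [Tm]

def Dm (n : ℕ) (M N : ℝ) (u v : ℕ → ℝ) : Matrix (Fin n) (Fin n) ℝ :=
  Matrix.of fun i j =>
    if j.val = 0 then u i.val
    else if j.val = 1 then v i.val
    else if i.val = j.val then N
    else if i.val + 1 = j.val then -M
    else 0

lemma detDm (M N : ℝ) (u v : ℕ → ℝ) :
    ∀ n, 2 ≤ n → (Dm n M N u v).det =
      ∑ t ∈ Finset.Icc 1 (n - 1),
        M ^ (t - 1) * N ^ (n - 1 - t) * (u 0 * v t - u t * v 0) := by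
  intro n hn
  induction n, hn using Nat.le_induction with
  | base =>
    rw [Matrix.det_fin_two]
    simp [Dm]
    ring
  | succ n hn ih =>
    obtain ⟨m, rfl⟩ : ∃ m, n = m + 2 := ⟨n - 2, by omega⟩
    set n := m + 2 with hndef
    rw [Matrix.det_succ_row _ (Fin.last n)]
    have hzero : ∀ j : Fin (n+1), j ∉ ({0, 1, Fin.last n} : Finset (Fin (n+1))) →
        (-1:ℝ)^(((Fin.last n : Fin (n+1)) : ℕ) + (j : ℕ)) * Dm (n+1) M N u v (Fin.last n) j *
          ((Dm (n+1) M N u v).submatrix (Fin.last n).succAbove j.succAbove).det = 0 := by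
      intro j hj
      simp only [Finset.mem_insert, Finset.mem_singleton] at hj
      push_neg at hj
      obtain ⟨h0, h1, hl⟩ := hj
      have hv0 : (j : ℕ) ≠ 0 := fun h => h0 (Fin.ext h)
      have hv1 : (j : ℕ) ≠ 1 := fun h => h1 (Fin.ext (by simpa [Nat.mod_eq_of_lt (show 1 < n + 1 by omega)] using h))
      have hvl : (j : ℕ) ≠ n := fun h => hl (Fin.ext (by simpa using h))
      have hDz : Dm (n+1) M N u v (Fin.last n) j = 0 := by
        simp only [Dm, Matrix.of_apply, Fin.val_last]
        rw [if_neg hv0, if_neg hv1, if_neg (by omega), if_neg (by omega)]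
      rw [hDz]
      ring
    rw [← Finset.sum_subset (Finset.subset_univ ({0, 1, Fin.last n} : Finset (Fin (n+1))))
        (fun x _ hx => hzero x hx)]
    have hne01 : (0 : Fin (n+1)) ≠ 1 := by
      intro h; have := congrArg Fin.val h; simp at this
    have hne0l : (0 : Fin (n+1)) ≠ Fin.last n := by
      intro h; have := congrArg Fin.val h; simp [Fin.val_last] at this
    have hne1l : (1 : Fin (n+1)) ≠ Fin.last n := by
      intro h; have := congrArg Fin.val h; rw [Fin.val_last, Fin.val_one', Nat.mod_eq_of_lt (by omega)] at this; omega
    rw [show ({0, 1, Fin.last n} : Finset (Fin (n+1))) =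
        insert 0 (insert 1 ({Fin.last n} : Finset (Fin (n+1)))) from rfl]
    rw [Finset.sum_insert (by simp [hne01, hne0l]), Finset.sum_insert (by simp [hne1l]),
        Finset.sum_singleton]
    -- entries of the last row
    have hA0 : Dm (n+1) M N u v (Fin.last n) (0 : Fin (n+1)) = u n := by
      simp [Dm, Fin.val_last]
    have hA1 : Dm (n+1) M N u v (Fin.last n) (1 : Fin (n+1)) = v n := by
      simp [Dm, Fin.val_last]
    have hAl : Dm (n+1) M N u v (Fin.last n) (Fin.last n) = N := by
      simp only [Dm, Matrix.of_apply, Fin.val_last]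
      rw [if_neg (by omega), if_neg (by omega)]
      simp
    -- minor at the last column
    have hsubl : (Dm (n+1) M N u v).submatrix (Fin.last n).succAbove (Fin.last n).succAbove
        = Dm n M N u v := by
      ext i j
      simp [Dm, Fin.succAbove_last, Matrix.submatrix_apply, Fin.coe_castSucc]
    -- minor at column 0
    have hsub0 : ((Dm (n+1) M N u v).submatrix (Fin.last n).succAbove
        (0 : Fin (n+1)).succAbove).det = v 0 * (-M) ^ (n - 1) := by
      set B := (Dm (n+1) M N u v).submatrix (Fin.last n).succAbove (0 : Fin (n+1)).succAbove
        with hBdef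
      have hBe : ∀ i j : Fin n, B i j = if (j:ℕ) = 0 then v i.val
          else if (i:ℕ) = (j:ℕ) + 1 then N else if (i:ℕ) = (j:ℕ) then -M else 0 := by
        intro i j
        simp only [hBdef, Matrix.submatrix_apply, Fin.succAbove_last, Fin.succAbove_zero,
          Dm, Matrix.of_apply, Fin.coe_castSucc, Fin.val_succ]
        split_ifs <;> first | rfl | omega | exact (‹False›).elim
      have hlow : B.BlockTriangular OrderDual.toDual := by
        intro i j hij
        have hij' : (i:ℕ) < (j:ℕ) := hij
        rw [hBe]
        rw [if_neg (by omega), if_neg (by omega), if_neg (by omega)]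
      rw [Matrix.det_of_lowerTriangular B hlow]
      rw [← Finset.mul_prod_erase Finset.univ _ (Finset.mem_univ (0 : Fin n))]
      have h00 : B 0 0 = v 0 := by rw [hBe]; simp
      have hconst : ∀ i ∈ Finset.univ.erase (0 : Fin n), B i i = -M := by
        intro i hi
        have hi0 : (i:ℕ) ≠ 0 := fun h => (Finset.mem_erase.1 hi).1 (Fin.ext h)
        rw [hBe, if_neg hi0, if_neg (by omega), if_pos rfl]
      rw [Finset.prod_congr rfl hconst, Finset.prod_const, h00]
      congr 1
      rw [Finset.card_erase_of_mem (Finset.mem_univ _), Finset.card_univ, Fintype.card_fin]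
    -- minor at column 1
    have hsa1 : ∀ j : Fin n, (((1 : Fin (n+1)).succAbove j) : ℕ)
        = if (j:ℕ) = 0 then 0 else (j:ℕ) + 1 := by
      intro j
      by_cases h : (j:ℕ) = 0
      · rw [if_pos h, Fin.succAbove, if_pos]
        · exact h
        · rw [Fin.lt_def]
          simp only [Fin.coe_castSucc, h]
          norm_num
          exact Nat.lt_of_lt_of_eq Nat.one_pos (Nat.mod_eq_of_lt (show 1 < n + 1 by omega)).symm
      · rw [if_neg h, Fin.succAbove, if_neg]
        · rfl
        · rw [Fin.lt_def]
          simp only [Fin.coe_castSucc, Fin.val_one]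
          omega
    have hsub1 : ((Dm (n+1) M N u v).submatrix (Fin.last n).succAbove
        (1 : Fin (n+1)).succAbove).det = u 0 * (-M) ^ (n - 1) := by
      set B := (Dm (n+1) M N u v).submatrix (Fin.last n).succAbove (1 : Fin (n+1)).succAbove
        with hBdef
      have hBe : ∀ i j : Fin n, B i j = if (j:ℕ) = 0 then u i.val
          else if (i:ℕ) = (j:ℕ) + 1 then N else if (i:ℕ) = (j:ℕ) then -M else 0 := by
        intro i j
        simp only [hBdef, Matrix.submatrix_apply, Fin.succAbove_last,
          Dm, Matrix.of_apply, Fin.coe_castSucc, hsa1]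
        split_ifs <;> first | rfl | omega | exact (‹False›).elim
      have hlow : B.BlockTriangular OrderDual.toDual := by
        intro i j hij
        have hij' : (i:ℕ) < (j:ℕ) := hij
        rw [hBe]
        rw [if_neg (by omega), if_neg (by omega), if_neg (by omega)]
      rw [Matrix.det_of_lowerTriangular B hlow]
      rw [← Finset.mul_prod_erase Finset.univ _ (Finset.mem_univ (0 : Fin n))]
      have h00 : B 0 0 = u 0 := by rw [hBe]; simp
      have hconst : ∀ i ∈ Finset.univ.erase (0 : Fin n), B i i = -M := by
        intro i hi
        have hi0 : (i:ℕ) ≠ 0 := fun h => (Finset.mem_erase.1 hi).1 (Fin.ext h)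
        rw [hBe, if_neg hi0, if_neg (by omega), if_pos rfl]
      rw [Finset.prod_congr rfl hconst, Finset.prod_const, h00]
      congr 1
      rw [Finset.card_erase_of_mem (Finset.mem_univ _), Finset.card_univ, Fintype.card_fin]
    rw [hA0, hA1, hAl, hsubl, hsub0, hsub1, ih]
    simp only [Fin.val_last, Fin.val_zero, Fin.val_one]
    have hoddpow : (-1:ℝ)^(n+0) * (-1:ℝ)^(n-1) = -1 := by
      rw [← pow_add]; exact Odd.neg_one_pow ⟨m+1, by omega⟩
    have hevenpow : (-1:ℝ)^(n+1) * (-1:ℝ)^(n-1) = 1 := by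
      rw [← pow_add]; exact Even.neg_one_pow ⟨m+2, by omega⟩
    have hsame : (-1:ℝ)^(n+n) = 1 := Even.neg_one_pow ⟨n, by omega⟩
    have hnegM : (-M)^(n-1) = (-1:ℝ)^(n-1) * M^(n-1) := by
      rw [neg_pow M (n-1)]
    have t0 : (-1:ℝ)^(n+0) * u n * (v 0 * (-M)^(n-1)) = -(M^(n-1) * (u n * v 0)) := by
      rw [hnegM]
      calc (-1:ℝ)^(n+0) * u n * (v 0 * ((-1:ℝ)^(n-1) * M^(n-1)))
          = ((-1:ℝ)^(n+0) * (-1:ℝ)^(n-1)) * (u n * (v 0 * M^(n-1))) := by ring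
        _ = -(M^(n-1) * (u n * v 0)) := by rw [hoddpow]; ring
    have t1 : (-1:ℝ)^(n+1) * v n * (u 0 * (-M)^(n-1)) = M^(n-1) * (u 0 * v n) := by
      rw [hnegM]
      calc (-1:ℝ)^(n+1) * v n * (u 0 * ((-1:ℝ)^(n-1) * M^(n-1)))
          = ((-1:ℝ)^(n+1) * (-1:ℝ)^(n-1)) * (v n * (u 0 * M^(n-1))) := by ring
        _ = M^(n-1) * (u 0 * v n) := by rw [hevenpow]; ring
    rw [t0, t1, hsame, one_mul]
    rw [show n + 1 - 1 = (n - 1) + 1 from by omega]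
    rw [Finset.sum_Icc_succ_top (by omega : (1:ℕ) ≤ (n-1)+1)]
    rw [Finset.mul_sum]
    have hsum : ∀ t ∈ Finset.Icc 1 (n-1), N * (M^(t-1) * N^(n-1-t) * (u 0 * v t - u t * v 0))
        = M^(t-1) * N^((n-1)+1-t) * (u 0 * v t - u t * v 0) := by
      intro t ht
      rw [Finset.mem_Icc] at ht
      rw [show (n-1)+1-t = (n-1-t)+1 from by omega, pow_succ]
      ring
    rw [Finset.sum_congr rfl hsum]
    rw [show (n-1)+1 = n from by omega]
    rw [Nat.sub_self, pow_zero]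
    ring

lemma mulT (n : ℕ) (hn : 2 ≤ n) (H : ℕ → ℝ) (fk gk : ℝ)
    (hrec : ∀ m : ℕ, H (m + 2) = fk * H (m + 1) + gk * H m) :
    gCirc n 1 (fun m => H (m + 1)) * Tm n fk gk
      = Dm n (gk * (H n - H 0)) (H 1 - H (n + 1))
          (fun t => H ((n - t) % n + 1)) (fun t => H ((1 + (n - t)) % n + 1)) := by
  have hC : ∀ i l : Fin n, gCirc n 1 (fun m => H (m + 1)) i l
      = H (((l : ℕ) + (n - (i : ℕ))) % n + 1) := by
    intro i l
    simp only [gCirc, Matrix.of_apply, Nat.mul_one, Nat.mod_eq_of_lt i.isLt]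
  ext i j
  rw [Matrix.mul_apply]
  by_cases hj2 : 2 ≤ (j : ℕ)
  · -- columns ≥ 2
    set j1 : Fin n := ⟨(j : ℕ) - 1, by omega⟩ with hj1def
    set j2 : Fin n := ⟨(j : ℕ) - 2, by omega⟩ with hj2def
    have hT : ∀ l : Fin n, Tm n fk gk l j =
        if (l : ℕ) = (j : ℕ) then 1
        else if (l : ℕ) = (j : ℕ) - 1 then -fk
        else if (l : ℕ) = (j : ℕ) - 2 then -gk
        else 0 := by
      intro l
      simp only [Tm, Matrix.of_apply, Fin.ext_iff]
      split_ifs <;> first | rfl | omega | exact (‹False›).elim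
    have hzero : ∀ l : Fin n, l ∉ ({j, j1, j2} : Finset (Fin n)) →
        gCirc n 1 (fun m => H (m + 1)) i l * Tm n fk gk l j = 0 := by
      intro l hl
      simp only [Finset.mem_insert, Finset.mem_singleton] at hl
      push_neg at hl
      obtain ⟨h0, h1, h2⟩ := hl
      rw [hT]
      rw [if_neg (fun h => h0 (Fin.ext h)),
        if_neg (fun h => h1 (Fin.ext (by rw [h]))),
        if_neg (fun h => h2 (Fin.ext (by rw [h]))), mul_zero]
    rw [← Finset.sum_subset (Finset.subset_univ ({j, j1, j2} : Finset (Fin n)))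
        (fun x _ hx => hzero x hx)]
    have hnejj1 : j ≠ j1 := by
      intro h; have := congrArg Fin.val h; simp only [hj1def] at this; omega
    have hnejj2 : j ≠ j2 := by
      intro h; have := congrArg Fin.val h; simp only [hj2def] at this; omega
    have hnej12 : j1 ≠ j2 := by
      intro h; have := congrArg Fin.val h; simp only [hj1def, hj2def] at this; omega
    rw [show ({j, j1, j2} : Finset (Fin n)) = insert j (insert j1 ({j2} : Finset (Fin n)))
        from rfl]
    rw [Finset.sum_insert (by simp [hnejj1, hnejj2]), Finset.sum_insert (by simp [hnej12]),
      Finset.sum_singleton]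
    have hj1v : (j1 : ℕ) = (j : ℕ) - 1 := rfl
    have hj2v : (j2 : ℕ) = (j : ℕ) - 2 := rfl
    rw [hT j, hT j1, hT j2]
    rw [if_pos rfl]
    rw [if_neg (by omega), if_pos (by omega)]
    rw [if_neg (by omega), if_neg (by omega), if_pos (by omega)]
    rw [hC, hC, hC]
    -- now a case analysis on the relation between i and j
    rcases Nat.lt_trichotomy (i : ℕ) (j : ℕ) with hij | hij | hij
    · rcases Nat.eq_or_lt_of_le hij with hij1 | hij1
      · -- i + 1 = j : entry -M
        have e0 : ((j : ℕ) + (n - (i : ℕ))) % n = 1 := by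
          rw [show (j : ℕ) + (n - (i : ℕ)) = n + 1 from by omega, Nat.add_mod_left,
            Nat.mod_eq_of_lt (by omega)]
        have e1 : ((j1 : ℕ) + (n - (i : ℕ))) % n = 0 := by
          rw [hj1v, show (j : ℕ) - 1 + (n - (i : ℕ)) = n from by omega, Nat.mod_self]
        have e2 : ((j2 : ℕ) + (n - (i : ℕ))) % n = n - 1 := by
          rw [hj2v, show (j : ℕ) - 2 + (n - (i : ℕ)) = n - 1 from by omega,
            Nat.mod_eq_of_lt (by omega)]
        rw [e0, e1, e2]
        have hD : Dm n (gk * (H n - H 0)) (H 1 - H (n + 1))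
            (fun t => H ((n - t) % n + 1)) (fun t => H ((1 + (n - t)) % n + 1)) i j
            = -(gk * (H n - H 0)) := by
          simp only [Dm, Matrix.of_apply]
          rw [if_neg (by omega), if_neg (by omega), if_neg (by omega), if_pos hij1]
        rw [hD, show (n - 1) + 1 = n from by omega]
        have h2' := hrec 0
        norm_num at h2'
        norm_num
        rw [h2']
        ring
      · -- i < j - 1 : entry 0
        have e0 : ((j : ℕ) + (n - (i : ℕ))) % n = (j : ℕ) - (i : ℕ) := by
          rw [show (j : ℕ) + (n - (i : ℕ)) = n + ((j : ℕ) - (i : ℕ)) from by omega,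
            Nat.add_mod_left, Nat.mod_eq_of_lt (by omega)]
        have e1 : ((j1 : ℕ) + (n - (i : ℕ))) % n = (j : ℕ) - (i : ℕ) - 1 := by
          rw [hj1v, show (j : ℕ) - 1 + (n - (i : ℕ)) = n + ((j : ℕ) - (i : ℕ) - 1) from by omega,
            Nat.add_mod_left, Nat.mod_eq_of_lt (by omega)]
        have e2 : ((j2 : ℕ) + (n - (i : ℕ))) % n = (j : ℕ) - (i : ℕ) - 2 := by
          rw [hj2v, show (j : ℕ) - 2 + (n - (i : ℕ)) = n + ((j : ℕ) - (i : ℕ) - 2) from by omega,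
            Nat.add_mod_left, Nat.mod_eq_of_lt (by omega)]
        rw [e0, e1, e2]
        have hD : Dm n (gk * (H n - H 0)) (H 1 - H (n + 1))
            (fun t => H ((n - t) % n + 1)) (fun t => H ((1 + (n - t)) % n + 1)) i j = 0 := by
          simp only [Dm, Matrix.of_apply]
          rw [if_neg (by omega), if_neg (by omega), if_neg (by omega), if_neg (by omega)]
        rw [hD]
        have hr := hrec ((j : ℕ) - (i : ℕ) - 2)
        rw [show (j : ℕ) - (i : ℕ) - 2 + 2 = (j : ℕ) - (i : ℕ) from by omega,
          show (j : ℕ) - (i : ℕ) - 2 + 1 = (j : ℕ) - (i : ℕ) - 1 from by omega] at hr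
        have hr' := hrec ((j : ℕ) - (i : ℕ) - 1)
        rw [show (j : ℕ) - (i : ℕ) - 1 + 2 = (j : ℕ) - (i : ℕ) + 1 from by omega,
          show (j : ℕ) - (i : ℕ) - 1 + 1 = (j : ℕ) - (i : ℕ) from by omega] at hr'
        rw [show (j : ℕ) - (i : ℕ) - 1 + 1 = (j : ℕ) - (i : ℕ) from by omega,
          show (j : ℕ) - (i : ℕ) - 2 + 1 = (j : ℕ) - (i : ℕ) - 1 from by omega, hr']
        ring
    · -- i = j : entry N
      have e0 : ((j : ℕ) + (n - (i : ℕ))) % n = 0 := by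
        rw [show (j : ℕ) + (n - (i : ℕ)) = n from by omega, Nat.mod_self]
      have e1 : ((j1 : ℕ) + (n - (i : ℕ))) % n = n - 1 := by
        rw [hj1v, show (j : ℕ) - 1 + (n - (i : ℕ)) = n - 1 from by omega,
          Nat.mod_eq_of_lt (by omega)]
      have e2 : ((j2 : ℕ) + (n - (i : ℕ))) % n = n - 2 := by
        rw [hj2v, show (j : ℕ) - 2 + (n - (i : ℕ)) = n - 2 from by omega,
          Nat.mod_eq_of_lt (by omega)]
      rw [e0, e1, e2]
      have hD : Dm n (gk * (H n - H 0)) (H 1 - H (n + 1))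
          (fun t => H ((n - t) % n + 1)) (fun t => H ((1 + (n - t)) % n + 1)) i j
          = H 1 - H (n + 1) := by
        simp only [Dm, Matrix.of_apply]
        rw [if_neg (by omega), if_neg (by omega), if_pos (by omega)]
      rw [hD, show (n - 1) + 1 = n from by omega, show (n - 2) + 1 = n - 1 from by omega]
      norm_num
      have hr := hrec (n - 1)
      rw [show n - 1 + 2 = n + 1 from by omega, show n - 1 + 1 = n from by omega] at hr
      rw [hr]
      ring
    · -- i > j : entry 0
      have e0 : ((j : ℕ) + (n - (i : ℕ))) % n = (j : ℕ) + (n - (i : ℕ)) := by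
        rw [Nat.mod_eq_of_lt (by omega)]
      have e1 : ((j1 : ℕ) + (n - (i : ℕ))) % n = (j : ℕ) + (n - (i : ℕ)) - 1 := by
        rw [hj1v, show (j : ℕ) - 1 + (n - (i : ℕ)) = (j : ℕ) + (n - (i : ℕ)) - 1 from by omega,
          Nat.mod_eq_of_lt (by omega)]
      have e2 : ((j2 : ℕ) + (n - (i : ℕ))) % n = (j : ℕ) + (n - (i : ℕ)) - 2 := by
        rw [hj2v, show (j : ℕ) - 2 + (n - (i : ℕ)) = (j : ℕ) + (n - (i : ℕ)) - 2 from by omega,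
          Nat.mod_eq_of_lt (by omega)]
      rw [e0, e1, e2]
      have hD : Dm n (gk * (H n - H 0)) (H 1 - H (n + 1))
          (fun t => H ((n - t) % n + 1)) (fun t => H ((1 + (n - t)) % n + 1)) i j = 0 := by
        simp only [Dm, Matrix.of_apply]
        rw [if_neg (by omega), if_neg (by omega), if_neg (by omega), if_neg (by omega)]
      rw [hD]
      set s := (j : ℕ) + (n - (i : ℕ)) with hsdef
      have hs : 2 ≤ s ∧ s < n := by constructor <;> omega
      have hr' := hrec (s - 1)
      rw [show s - 1 + 2 = s + 1 from by omega, show s - 1 + 1 = s from by omega] at hr'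
      rw [show s - 1 + 1 = s from by omega, show s - 2 + 1 = s - 1 from by omega, hr']
      ring
  · -- columns 0 and 1
    have hT : ∀ l : Fin n, Tm n fk gk l j = if l = j then 1 else 0 := by
      intro l
      simp only [Tm, Matrix.of_apply]
      by_cases hl : l = j
      · rw [if_pos hl, if_pos hl]
      · rw [if_neg hl, if_neg hl, if_neg (by omega), if_neg (by omega)]
    have hsum : ∀ l : Fin n, gCirc n 1 (fun m => H (m + 1)) i l * Tm n fk gk l j
        = if l = j then gCirc n 1 (fun m => H (m + 1)) i l else 0 := by
      intro l
      rw [hT]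
      split_ifs <;> ring
    rw [Finset.sum_congr rfl (fun l _ => hsum l), Finset.sum_ite_eq' Finset.univ j,
      if_pos (Finset.mem_univ j)]
    rw [hC]
    simp only [Dm, Matrix.of_apply]
    rcases Nat.lt_or_ge (j : ℕ) 1 with hj | hj
    · have hj0 : (j : ℕ) = 0 := by omega
      rw [if_pos hj0, hj0, Nat.zero_add]
    · have hj1 : (j : ℕ) = 1 := by omega
      rw [if_neg (by omega), if_pos hj1, hj1]

/-- Determinant of the g-circulant matrix of generalized k-Horadam numbers. -/
theorem det_gCirc_horadam
    (k : ℝ) (hk : 0 < k) (f g : ℝ → ℝ) (hfg : f k ^ 2 + 4 * g k > 0)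
    (a b : ℝ) (H : ℕ → ℝ) (hH0 : H 0 = a) (hH1 : H 1 = b)
    (hrec : ∀ m : ℕ, H (m + 2) = f k * H (m + 1) + g k * H m)
    (n r : ℕ) (hn : 2 ≤ n) (hgcd : Nat.gcd n r = 1)
    (M N : ℝ) (hM : M = g k * (H n - H 0)) (hN : N = H 1 - H (n + 1))
    (hH1ne : H 1 ≠ 0) (hMne : M ≠ 0) :
    (gCirc n r (fun m => H (m + 1))).det =
      (Qg n r).det *
        (H 1 * N ^ (n - 1) +
          H 1 * M ^ (n - 2) *
            ∑ i ∈ Finset.Icc 1 (n - 1),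
              (-(H 2 * H (i + 1)) / H 1 + H (i + 2)) * (N / M) ^ (i - 1)) := by
  have hn0 : 0 < n := by omega
  set u : ℕ → ℝ := fun t => H ((n - t) % n + 1) with hu
  set v : ℕ → ℝ := fun t => H ((1 + (n - t)) % n + 1) with hv
  have hdetC1 : (gCirc n 1 (fun m => H (m + 1))).det = (Dm n M N u v).det := by
    rw [hM, hN, ← mulT n hn H (f k) (g k) hrec, Matrix.det_mul, detTm, mul_one]
  rw [gCirc_factor n r hn0 (fun m => H (m + 1)), Matrix.det_mul, hdetC1,
    detDm M N u v n hn]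
  congr 1
  -- values of u, v at the relevant points
  have hu0 : u 0 = H 1 := by
    rw [hu]
    simp
  have hv0 : v 0 = H 2 := by
    rw [hv]
    simp only [Nat.sub_zero]
    rw [Nat.add_comm 1 n, Nat.add_mod_left, Nat.mod_eq_of_lt (by omega)]
  have hut : ∀ t, 1 ≤ t → t ≤ n - 1 → u t = H (n - t + 1) := by
    intro t h1 h2
    rw [hu]
    simp only
    rw [Nat.mod_eq_of_lt (by omega)]
  have hvt : ∀ t, 2 ≤ t → t ≤ n - 1 → v t = H (n - t + 2) := by
    intro t h1 h2
    rw [hv]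
    simp only
    rw [Nat.mod_eq_of_lt (by omega), show 1 + (n - t) + 1 = n - t + 2 from by omega]
  have hv1 : v 1 = H 1 := by
    rw [hv]
    simp only
    rw [show 1 + (n - 1) = n from by omega, Nat.mod_self]
  -- transform the right-hand side sum
  rw [Finset.mul_sum]
  have hterm : ∀ i ∈ Finset.Icc 1 (n - 1),
      H 1 * M ^ (n - 2) * ((-(H 2 * H (i + 1)) / H 1 + H (i + 2)) * (N / M) ^ (i - 1))
      = M ^ (n - 1 - i) * N ^ (i - 1) * (H 1 * H (i + 2) - H 2 * H (i + 1)) := by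
    intro i hi
    rw [Finset.mem_Icc] at hi
    have hMsplit : M ^ (n - 2) = M ^ (n - 1 - i) * M ^ (i - 1) := by
      rw [← pow_add]
      congr 1
      omega
    have hMpow : (M : ℝ) ^ (i - 1) ≠ 0 := pow_ne_zero _ hMne
    rw [div_pow, hMsplit]
    field_simp
    ring
  rw [Finset.sum_congr rfl hterm]
  -- reindex the right-hand side sum by t = n - i
  have hreindex :
      ∑ i ∈ Finset.Icc 1 (n - 1),
        M ^ (n - 1 - i) * N ^ (i - 1) * (H 1 * H (i + 2) - H 2 * H (i + 1))
      = ∑ t ∈ Finset.Icc 1 (n - 1),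
        M ^ (t - 1) * N ^ (n - 1 - t) * (H 1 * H (n - t + 2) - H 2 * H (n - t + 1)) := by
    apply Finset.sum_nbij' (fun i => n - i) (fun t => n - t)
    · intro a ha
      rw [Finset.mem_Icc] at ha ⊢
      omega
    · intro a ha
      rw [Finset.mem_Icc] at ha ⊢
      omega
    · intro a ha
      rw [Finset.mem_Icc] at ha
      omega
    · intro a ha
      rw [Finset.mem_Icc] at ha
      omega
    · intro i hi
      rw [Finset.mem_Icc] at hi
      rw [show n - 1 - i = n - i - 1 from by omega, show i - 1 = n - 1 - (n - i) from by omega,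
        show i + 2 = n - (n - i) + 2 from by omega, show i + 1 = n - (n - i) + 1 from by omega]
  rw [hreindex]
  -- termwise comparison of the left-hand side sum
  have hsplit : ∀ t ∈ Finset.Icc 1 (n - 1),
      M ^ (t - 1) * N ^ (n - 1 - t) * (u 0 * v t - u t * v 0)
      = M ^ (t - 1) * N ^ (n - 1 - t) * (H 1 * H (n - t + 2) - H 2 * H (n - t + 1))
        + M ^ (t - 1) * N ^ (n - 1 - t) * (H 1 * (v t - H (n - t + 2))) := by
    intro t ht
    rw [Finset.mem_Icc] at ht
    rw [hu0, hv0, hut t ht.1 ht.2]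
    ring
  rw [Finset.sum_congr rfl hsplit, Finset.sum_add_distrib]
  have hdelta : ∑ t ∈ Finset.Icc 1 (n - 1),
      M ^ (t - 1) * N ^ (n - 1 - t) * (H 1 * (v t - H (n - t + 2))) = H 1 * N ^ (n - 1) := by
    rw [Finset.sum_eq_single_of_mem 1 (by rw [Finset.mem_Icc]; omega)]
    · rw [hv1, show n - 1 + 2 = n + 1 from by omega, ← hN]
      rw [show (1:ℕ) - 1 = 0 from rfl, pow_zero, show n - 1 - 1 = n - 2 from by omega]
      have : N ^ (n - 2) * N = N ^ (n - 1) := by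
        rw [← pow_succ]
        congr 1
        omega
      calc 1 * N ^ (n - 2) * (H 1 * N) = H 1 * (N ^ (n - 2) * N) := by ring
        _ = H 1 * N ^ (n - 1) := by rw [this]
    · intro t ht hne
      rw [Finset.mem_Icc] at ht
      rw [hvt t (by omega) ht.2, sub_self, mul_zero, mul_zero]
  rw [hdelta]
  ring
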